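/- For every f: {-1,1}^N → ℝ with ‖f‖_∞ ≤ 1, one has ∑_{S⊆[N]} |f̂(S)| ρ^{|S|} ≤ |f̂(∅)| + (1 − |f̂(∅)|)((1+ρ)^N − 1) for all ρ > 0; in particular, taking ρ = 2^{1/N} − 1 gives ∑_{S⊆[N]} |f̂(S)| (2^{1/N}−1)^{|S|} ≤ 1. -/

import Mathlib

def cubeChi (b : Bool) : ℝ := if b then 1 else -1

noncomputable def wCoeff {N : ℕ} (f : (Fin N → Bool) → ℝ) (S : Finset (Fin N)) : ℝ :=
  (∑ x : Fin N → Bool, f x * ∏ i ∈ S, cubeChi (x i)) / 2 ^ N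

noncomputable def cubeSup {N : ℕ} (f : (Fin N → Bool) → ℝ) : ℝ :=
  Finset.univ.sup' Finset.univ_nonempty (fun x => |f x|)

noncomputable def cubeAvg {N : ℕ} (f : (Fin N → Bool) → ℝ) : ℝ :=
  (∑ x : Fin N → Bool, f x) / 2 ^ N

lemma cubeChi_abs (b : Bool) : |cubeChi b| = 1 := by cases b <;> simp [cubeChi]

lemma cubeChi_not (b : Bool) : cubeChi (!b) = - cubeChi b := by cases b <;> simp [cubeChi]

lemma chi_abs {N : ℕ} (S : Finset (Fin N)) (x : Fin N → Bool) :
    |∏ i ∈ S, cubeChi (x i)| = 1 := by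
  rw [Finset.abs_prod]; simp [cubeChi_abs]

lemma sum_chi_zero {N : ℕ} (S : Finset (Fin N)) (hS : S.Nonempty) :
    ∑ x : Fin N → Bool, ∏ i ∈ S, cubeChi (x i) = 0 := by
  obtain ⟨i₀, hi₀⟩ := hS
  refine Finset.sum_involution (fun a _ => Function.update a i₀ (!a i₀)) ?_ ?_ ?_ ?_
  · intro a _
    have h1 : ∏ i ∈ S, cubeChi (Function.update a i₀ (!a i₀) i)
        = - ∏ i ∈ S, cubeChi (a i) := by
      rw [← Finset.mul_prod_erase S _ hi₀, ← Finset.mul_prod_erase S (fun i => cubeChi (a i)) hi₀]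
      rw [Function.update_self, cubeChi_not]
      rw [neg_mul]
      congr 1
      congr 1
      refine Finset.prod_congr rfl fun i hi => ?_
      rw [Function.update_of_ne (Finset.ne_of_mem_erase hi)]
    rw [h1]; ring
  · intro a _ _ h
    have := congrFun h i₀
    simp at this
  · intro a _; exact Finset.mem_univ _
  · intro a _
    funext j
    by_cases hj : j = i₀
    · subst hj; simp
    · simp [Function.update_of_ne hj]

lemma key_aux {N : ℕ} (f : (Fin N → Bool) → ℝ) (hb : ∀ x, |f x| ≤ 1)
    (S : Finset (Fin N)) (hS : S.Nonempty) (c : ℝ) (hc : |c| = 1) :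
    |wCoeff f ∅ + c * wCoeff f S| ≤ 1 := by
  have h2 : (0:ℝ) < 2 ^ N := by positivity
  set χ : (Fin N → Bool) → ℝ := fun x => ∏ i ∈ S, cubeChi (x i) with hχ
  have hsum : wCoeff f ∅ + c * wCoeff f S
      = (∑ x : Fin N → Bool, f x * (1 + c * χ x)) / 2 ^ N := by
    simp only [wCoeff, Finset.prod_empty, mul_one]
    rw [← mul_div_assoc, ← add_div]
    congr 1
    rw [Finset.mul_sum, ← Finset.sum_add_distrib]
    refine Finset.sum_congr rfl fun x _ => ?_
    ring
  have hnn : ∀ x, (0:ℝ) ≤ 1 + c * χ x := by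
    intro x
    have : |c * χ x| = 1 := by rw [abs_mul, hc, chi_abs, one_mul]
    nlinarith [neg_abs_le (c * χ x)]
  have hbound : |∑ x : Fin N → Bool, f x * (1 + c * χ x)| ≤ 2 ^ N := by
    calc |∑ x : Fin N → Bool, f x * (1 + c * χ x)|
        ≤ ∑ x : Fin N → Bool, |f x * (1 + c * χ x)| := Finset.abs_sum_le_sum_abs _ _
      _ ≤ ∑ x : Fin N → Bool, (1 + c * χ x) := by
          refine Finset.sum_le_sum fun x _ => ?_
          rw [abs_mul, abs_of_nonneg (hnn x)]
          nlinarith [hb x, hnn x, abs_nonneg (f x)]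
      _ = 2 ^ N := by
          rw [Finset.sum_add_distrib, ← Finset.mul_sum, sum_chi_zero S hS]
          simp [Finset.card_univ]
  rw [hsum, abs_div, abs_of_pos h2, div_le_one h2]
  exact hbound

lemma key {N : ℕ} (f : (Fin N → Bool) → ℝ) (hb : ∀ x, |f x| ≤ 1)
    (S : Finset (Fin N)) (hS : S.Nonempty) :
    |wCoeff f ∅| + |wCoeff f S| ≤ 1 := by
  have h1 := key_aux f hb S hS 1 (by norm_num)
  have h2 := key_aux f hb S hS (-1) (by norm_num)
  rw [abs_le] at h1 h2
  rcases abs_cases (wCoeff f ∅) with ⟨e1, _⟩ | ⟨e1, _⟩ <;>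
    rcases abs_cases (wCoeff f S) with ⟨e2, _⟩ | ⟨e2, _⟩ <;>
  · rw [e1, e2]; simp only [one_mul, neg_one_mul] at h1 h2; linarith [h1.1, h1.2, h2.1, h2.2]

lemma sum_rho {N : ℕ} (ρ : ℝ) :
    ∑ S : Finset (Fin N), ρ ^ S.card = (1 + ρ) ^ N := by
  have h := Finset.prod_add (fun _ : Fin N => ρ) (fun _ => (1:ℝ)) Finset.univ
  simp [Finset.powerset_univ, add_comm] at h
  rw [← h]
  simp [add_comm]

theorem stmt2 {N : ℕ} (hN : 1 ≤ N) (f : (Fin N → Bool) → ℝ) (hf : cubeSup f ≤ 1) :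
    (∀ ρ : ℝ, 0 < ρ →
      ∑ S : Finset (Fin N), |wCoeff f S| * ρ ^ S.card ≤
        |wCoeff f ∅| + (1 - |wCoeff f ∅|) * ((1 + ρ) ^ N - 1)) ∧
    ∑ S : Finset (Fin N),
      |wCoeff f S| * ((2 : ℝ) ^ ((1 : ℝ) / N) - 1) ^ S.card ≤ 1 := by
  have hb : ∀ x, |f x| ≤ 1 := fun x =>
    le_trans (Finset.le_sup' (fun x => |f x|) (Finset.mem_univ x)) hf
  have hmain : ∀ ρ : ℝ, 0 < ρ →
      ∑ S : Finset (Fin N), |wCoeff f S| * ρ ^ S.card ≤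
        |wCoeff f ∅| + (1 - |wCoeff f ∅|) * ((1 + ρ) ^ N - 1) := by
    intro ρ hρ
    rw [← Finset.add_sum_erase _ _ (Finset.mem_univ (∅ : Finset (Fin N)))]
    simp only [Finset.card_empty, pow_zero, mul_one]
    gcongr |wCoeff f ∅| + ?_
    have hterm : ∀ S ∈ Finset.univ.erase (∅ : Finset (Fin N)),
        |wCoeff f S| * ρ ^ S.card ≤ (1 - |wCoeff f ∅|) * ρ ^ S.card := by
      intro S hSe
      have hS : S.Nonempty := Finset.nonempty_iff_ne_empty.mpr (Finset.ne_of_mem_erase hSe)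
      have := key f hb S hS
      have hpow : (0:ℝ) ≤ ρ ^ S.card := by positivity
      nlinarith
    calc ∑ S ∈ Finset.univ.erase (∅ : Finset (Fin N)), |wCoeff f S| * ρ ^ S.card
        ≤ ∑ S ∈ Finset.univ.erase (∅ : Finset (Fin N)), (1 - |wCoeff f ∅|) * ρ ^ S.card :=
          Finset.sum_le_sum hterm
      _ = (1 - |wCoeff f ∅|) * ((1 + ρ) ^ N - 1) := by
          rw [← Finset.mul_sum]
          congr 1
          have := Finset.add_sum_erase Finset.univ (fun S : Finset (Fin N) => ρ ^ S.card)
            (Finset.mem_univ (∅ : Finset (Fin N)))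
          rw [sum_rho] at this
          simp only [Finset.card_empty, pow_zero] at this
          linarith
  refine ⟨hmain, ?_⟩
  have hN0 : (N:ℝ) ≠ 0 := Nat.cast_ne_zero.mpr (by omega)
  set ρ : ℝ := (2 : ℝ) ^ ((1 : ℝ) / N) - 1 with hρdef
  have hNpos : (0:ℝ) < N := Nat.cast_pos.mpr (by omega)
  have hone : (1:ℝ) < (2 : ℝ) ^ ((1 : ℝ) / N) :=
    (Real.one_lt_rpow_iff_of_pos (by norm_num)).mpr (Or.inl ⟨by norm_num, div_pos one_pos hNpos⟩)
  have hρ : 0 < ρ := by rw [hρdef]; linarith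
  have hpow2 : (1 + ρ) ^ N = 2 := by
    rw [hρdef]
    have : (1 : ℝ) + ((2:ℝ) ^ ((1:ℝ)/N) - 1) = (2:ℝ) ^ ((1:ℝ)/N) := by ring
    rw [this, ← Real.rpow_natCast ((2:ℝ) ^ ((1:ℝ)/N)) N, ← Real.rpow_mul (by norm_num)]
    rw [one_div, inv_mul_cancel₀ hN0, Real.rpow_one]
  have := hmain ρ hρ
  rw [hpow2] at this
  have habs : |wCoeff f ∅| ≤ 1 := by
    have h0 : (⟨0, by omega⟩ : Fin N) ∈ ({⟨0, by omega⟩} : Finset (Fin N)) := Finset.mem_singleton_self _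
    have := key f hb {⟨0, by omega⟩} ⟨_, h0⟩
    have := abs_nonneg (wCoeff f {(⟨0, by omega⟩ : Fin N)})
    linarith
  nlinarith [this]
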